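/- Let a ≥ 1, μ ≥ 2, j ≥ 1 be integers. Define σ_{μ,j}(p_a) as the sum of coefficients c_λ in the e-expansion p_a = Σ_λ c_λ e_λ over partitions λ ⊢ a with λ'_1 = μ and λ'_2 = j. Then for a ≥ 3: σ_{μ,j}(p_a) = σ_{μ−1,j}(p_{a−1}) + Σ_{i=μ+j−2}^{a−2} (−1)^{a−1+i} σ_{μ−1,j−1}(p_i). -/

import Mathlib

open MvPolynomial

/-- The set of partitions `λ ⊢ d` with `λ'_1 = μ` (i.e. `λ` has exactly `μ` parts) and
`λ'_2 = j` (i.e. `λ` has exactly `j` parts of size at least 2). -/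
def sigmaSet (d μ j : ℕ) : Finset (Nat.Partition d) :=
  Finset.univ.filter (fun p => p.parts.card = μ ∧ (p.parts.filter (fun x => 2 ≤ x)).card = j)


section Aux
open Multiset Finset


lemma part_le {n : ℕ} (p : Nat.Partition n) {k : ℕ} (hk : k ∈ p.parts) : k ≤ n := by
  rw [← p.parts_sum]
  exact Multiset.le_sum_of_mem hk

/-- exponent vector of a partition -/
noncomputable def pexp {n : ℕ} (p : Nat.Partition n) : Fin n →₀ ℕ :=
  Finsupp.equivFunOnFinite.symm (fun i => p.parts.count ((i : ℕ) + 1))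

lemma pexp_apply {n : ℕ} (p : Nat.Partition n) (i : Fin n) :
    pexp p i = p.parts.count ((i : ℕ) + 1) := rfl

lemma pexp_injective {n : ℕ} : Function.Injective (pexp (n := n)) := by
  intro p q hpq
  ext1
  ext k
  rcases Nat.eq_zero_or_pos k with rfl | hk
  · rw [Multiset.count_eq_zero_of_notMem, Multiset.count_eq_zero_of_notMem]
    · exact fun h => lt_irrefl 0 (q.parts_pos h)
    · exact fun h => lt_irrefl 0 (p.parts_pos h)
  rcases le_or_gt k n with hkn | hkn
  · have hlt : k - 1 < n := by omega
    have := DFunLike.congr_fun hpq ⟨k - 1, hlt⟩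
    simpa [pexp_apply, Nat.sub_add_cancel hk] using this
  · rw [Multiset.count_eq_zero_of_notMem, Multiset.count_eq_zero_of_notMem]
    · exact fun h => absurd (part_le q h) (by omega)
    · exact fun h => absurd (part_le p h) (by omega)

lemma esymmAlgHom_monomial_pexp {n N : ℕ} (p : Nat.Partition n) :
    (esymmAlgHom (Fin N) ℚ n (monomial (pexp p) 1) : MvPolynomial (Fin N) ℚ)
      = esymmPart (Fin N) ℚ p := by
  rw [esymmAlgHom_apply, aeval_monomial, map_one, one_mul]
  rw [Finsupp.prod_pow]
  simp only [pexp_apply]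
  rw [esymmPart, Finset.prod_multiset_map_count]
  rw [Fin.prod_univ_eq_prod_range (fun i => esymm (Fin N) ℚ (i + 1) ^ p.parts.count (i + 1))]
  rw [show (Finset.range n).prod (fun i => esymm (Fin N) ℚ (i + 1) ^ p.parts.count (i + 1))
      = ∏ k ∈ Finset.Icc 1 n, esymm (Fin N) ℚ k ^ p.parts.count k from
    Finset.prod_nbij (fun i => i + 1) (by intro i hi; simp at hi ⊢; omega)
      (by intro i _ j _ h; simpa using h)
      (by intro k hk; simp at hk ⊢; exact ⟨k - 1, by omega, by omega⟩)
      (fun i _ => rfl)]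
  refine (Finset.prod_subset ?_ ?_).symm
  · intro k hk
    simp only [Multiset.mem_toFinset] at hk
    simp only [Finset.mem_Icc]
    exact ⟨p.parts_pos hk, part_le p hk⟩
  · intro k _ hk
    simp only [Multiset.mem_toFinset] at hk
    rw [Multiset.count_eq_zero_of_notMem hk, pow_zero]

set_option synthInstance.maxHeartbeats 1000000 in
set_option maxHeartbeats 1000000 in
lemma esymmPart_eq_zero {n N : ℕ} (hn : n ≤ N) (d : Nat.Partition n → ℚ)
    (h : ∑ p : Nat.Partition n, d p • esymmPart (Fin N) ℚ p = 0) : ∀ p, d p = 0 := by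
  intro p₀
  have hinj : Function.Injective (esymmAlgHom (Fin N) ℚ n) :=
    esymmAlgHom_injective ℚ (by simpa using hn)
  have h0 : esymmAlgHom (Fin N) ℚ n (∑ p : Nat.Partition n, d p • monomial (pexp p) 1) = 0 := by
    rw [← Subalgebra.coe_eq_zero, map_sum, AddSubmonoidClass.coe_finset_sum, ← h]
    refine Finset.sum_congr rfl fun p _ => ?_
    rw [map_smul]
    rw [SetLike.val_smul]
    rw [esymmAlgHom_monomial_pexp]
  have h1 : (∑ p : Nat.Partition n, d p • monomial (pexp p) (1 : ℚ)) = 0 := by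
    apply hinj
    rw [h0, _root_.map_zero]
  have h2 := congrArg (coeff (pexp p₀)) h1
  simp only [coeff_sum, coeff_smul, coeff_monomial, coeff_zero, smul_eq_mul, mul_ite,
    mul_one, mul_zero] at h2
  have h3 : ∀ p : Nat.Partition n, (if pexp p = pexp p₀ then d p else 0)
      = if p = p₀ then d p else 0 := fun p => by
    simp [pexp_injective.eq_iff]
  rw [Finset.sum_congr rfl (fun p _ => h3 p), Fintype.sum_ite_eq' p₀ (fun p => d p)] at h2
  exact h2


/-- Insert the part `a - i` into a partition of `i`, giving a partition of `a` (for `i < a`). -/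
def liftPart (a i : ℕ) (q : Nat.Partition i) : Nat.Partition a :=
  if h : i ≤ a then Nat.Partition.ofSums a ((a - i) ::ₘ q.parts) (by simp [q.parts_sum]; omega)
  else Nat.Partition.indiscrete a

lemma liftPart_parts {a i : ℕ} (h : i < a) (q : Nat.Partition i) :
    (liftPart a i q).parts = (a - i) ::ₘ q.parts := by
  rw [liftPart, dif_pos h.le, Nat.Partition.ofSums_parts, Multiset.filter_cons_of_pos _ (by omega)]
  congr 1
  rw [Multiset.filter_eq_self]
  exact fun k hk => (q.parts_pos hk).ne'

lemma esymmPart_liftPart {N a i : ℕ} (h : i < a) (q : Nat.Partition i) :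
    esymmPart (Fin N) ℚ (liftPart a i q)
      = esymm (Fin N) ℚ (a - i) * esymmPart (Fin N) ℚ q := by
  simp [esymmPart, liftPart_parts h]

lemma liftPart_inj {a i : ℕ} (h : i < a) {q q' : Nat.Partition i}
    (hqq : liftPart a i q = liftPart a i q') : q = q' := by
  have := congrArg Nat.Partition.parts hqq
  rw [liftPart_parts h, liftPart_parts h] at this
  exact Nat.Partition.ext (Multiset.cons_inj_right _ |>.mp this)

lemma newton_reindex {N a : ℕ} (ha : 1 ≤ a) :
    psum (Fin N) ℚ a = (-1 : MvPolynomial (Fin N) ℚ) ^ (a + 1) * a * esymm (Fin N) ℚ a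
      - ∑ i ∈ Finset.Icc 1 (a - 1),
          (-1 : MvPolynomial (Fin N) ℚ) ^ (a - i) * esymm (Fin N) ℚ (a - i) * psum (Fin N) ℚ i := by
  rw [psum_eq_mul_esymm_sub_sum (Fin N) ℚ a ha]
  congr 1
  refine Finset.sum_nbij' (fun p => p.2) (fun i => (a - i, i)) ?_ ?_ ?_ ?_ ?_
  · intro p hp
    simp only [Finset.mem_filter, Finset.HasAntidiagonal.mem_antidiagonal, Set.mem_Ioo] at hp
    simp only [Finset.mem_Icc]
    omega
  · intro i hi
    simp only [Finset.mem_Icc] at hi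
    simp only [Finset.mem_filter, Finset.HasAntidiagonal.mem_antidiagonal, Set.mem_Ioo]
    omega
  · intro p hp
    simp only [Finset.mem_filter, Finset.HasAntidiagonal.mem_antidiagonal, Set.mem_Ioo] at hp
    have : a - p.2 = p.1 := by omega
    simp [this]
  · intro i _
    simp
  · intro p hp
    simp only [Finset.mem_filter, Finset.HasAntidiagonal.mem_antidiagonal, Set.mem_Ioo] at hp
    have : a - p.2 = p.1 := by omega
    simp [this]

lemma sign_eq {i a : ℕ} (h1 : 1 ≤ i) (h2 : i ≤ a) : (-1 : ℚ) ^ (a - 1 + i) = -(-1 : ℚ) ^ (a - i) := by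
  have h : a - 1 + i = (a - i) + (2 * (i - 1) + 1) := by omega
  rw [h, pow_add, pow_succ, pow_mul, neg_one_sq, one_pow, one_mul, mul_neg, mul_one]

/-- The coefficients produced by Newton's identity. -/
noncomputable def cNew (a : ℕ) (c : (i : ℕ) → i.Partition → ℚ) (l : Nat.Partition a) : ℚ :=
  (if l = Nat.Partition.indiscrete a then ((-1 : ℚ) ^ (a + 1) * a) else 0)
  + ∑ i ∈ Finset.Icc 1 (a - 1),
      ∑ q ∈ Finset.univ.filter (fun q : Nat.Partition i => liftPart a i q = l),
        (-1 : ℚ) ^ (a - 1 + i) * c i q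

lemma psum_expand {N a : ℕ} (ha : 1 ≤ a) (c : (i : ℕ) → i.Partition → ℚ)
    (hc : ∀ i, 1 ≤ i → i < a →
      psum (Fin N) ℚ i = ∑ p : i.Partition, c i p • esymmPart (Fin N) ℚ p) :
    psum (Fin N) ℚ a = ∑ l : Nat.Partition a, cNew a c l • esymmPart (Fin N) ℚ l := by
  have key : ∑ l : Nat.Partition a, cNew a c l • esymmPart (Fin N) ℚ l
      = (-1 : MvPolynomial (Fin N) ℚ) ^ (a + 1) * a * esymm (Fin N) ℚ a
        - ∑ i ∈ Finset.Icc 1 (a - 1),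
            (-1 : MvPolynomial (Fin N) ℚ) ^ (a - i) * esymm (Fin N) ℚ (a - i)
              * psum (Fin N) ℚ i := by
    simp only [cNew, add_smul, Finset.sum_add_distrib]
    have h1 : ∑ l : Nat.Partition a,
        (if l = Nat.Partition.indiscrete a then ((-1 : ℚ) ^ (a + 1) * a) else 0)
          • esymmPart (Fin N) ℚ l
        = (-1 : MvPolynomial (Fin N) ℚ) ^ (a + 1) * a * esymm (Fin N) ℚ a := by
      simp only [ite_smul, zero_smul]
      rw [Fintype.sum_ite_eq' (Nat.Partition.indiscrete a)
        (fun l => ((-1 : ℚ) ^ (a + 1) * a) • esymmPart (Fin N) ℚ l)]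
      rw [esymmPart_indiscrete]
      simp only [smul_eq_C_mul, map_mul, map_pow, map_neg, map_one, map_natCast]
      try ring
    have h2 : ∑ l : Nat.Partition a,
        (∑ i ∈ Finset.Icc 1 (a - 1),
          ∑ q ∈ Finset.univ.filter (fun q : Nat.Partition i => liftPart a i q = l),
            (-1 : ℚ) ^ (a - 1 + i) * c i q) • esymmPart (Fin N) ℚ l
        = - ∑ i ∈ Finset.Icc 1 (a - 1),
            (-1 : MvPolynomial (Fin N) ℚ) ^ (a - i) * esymm (Fin N) ℚ (a - i)
              * psum (Fin N) ℚ i := by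
      simp only [Finset.sum_smul]
      rw [Finset.sum_comm]
      rw [← Finset.sum_neg_distrib]
      refine Finset.sum_congr rfl fun i hi => ?_
      simp only [Finset.mem_Icc] at hi
      have hia : i < a := by omega
      have step1 : ∀ l : Nat.Partition a,
          ∑ q ∈ Finset.univ.filter (fun q : Nat.Partition i => liftPart a i q = l),
            ((-1 : ℚ) ^ (a - 1 + i) * c i q) • esymmPart (Fin N) ℚ l
          = ∑ q ∈ Finset.univ.filter (fun q : Nat.Partition i => liftPart a i q = l),
            ((-1 : ℚ) ^ (a - 1 + i) * c i q) • esymmPart (Fin N) ℚ (liftPart a i q) := by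
        intro l
        refine Finset.sum_congr rfl fun q hq => ?_
        simp only [Finset.mem_filter] at hq
        rw [hq.2]
      rw [Finset.sum_congr rfl fun l _ => step1 l]
      rw [Finset.sum_fiberwise_of_maps_to (fun q _ => Finset.mem_univ (liftPart a i q))]
      rw [hc i hi.1 hia, Finset.mul_sum, ← Finset.sum_neg_distrib]
      refine Finset.sum_congr rfl fun q _ => ?_
      rw [esymmPart_liftPart hia, sign_eq hi.1 hia.le]
      simp only [smul_eq_C_mul, map_mul, map_neg, map_pow, map_one]
      ring
    rw [h1, h2, sub_eq_add_neg]
  rw [newton_reindex ha, key]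

lemma parts_card_add_le {i : ℕ} (q : Nat.Partition i) :
    q.parts.card + (q.parts.filter (fun x => 2 ≤ x)).card ≤ i := by
  have hsum := q.parts_sum
  have h1 : (q.parts.filter (fun x => 2 ≤ x)).card • 2
      ≤ (q.parts.filter (fun x => 2 ≤ x)).sum :=
    Multiset.card_nsmul_le_sum (fun x hx => (Multiset.mem_filter.1 hx).2)
  have h2 : (q.parts.filter (fun x => ¬ 2 ≤ x)).card • 1
      ≤ (q.parts.filter (fun x => ¬ 2 ≤ x)).sum :=
    Multiset.card_nsmul_le_sum (fun x hx => q.parts_pos (Multiset.mem_filter.1 hx).1)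
  have h3 : (q.parts.filter (fun x => 2 ≤ x)).sum
      + (q.parts.filter (fun x => ¬ 2 ≤ x)).sum = q.parts.sum :=
    Multiset.sum_filter_add_sum_filter_not _
  have h4 : (q.parts.filter (fun x => 2 ≤ x)).card
      + (q.parts.filter (fun x => ¬ 2 ≤ x)).card = q.parts.card := by
    rw [← Multiset.card_add, Multiset.filter_add_not]
  simp only [smul_eq_mul] at h1 h2
  omega

lemma sigmaSet_eq_empty {i m l : ℕ} (h : i < m + l) : sigmaSet i m l = ∅ := by
  ext q
  simp only [sigmaSet, Finset.mem_filter, Finset.mem_univ, true_and, Finset.notMem_empty,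
    iff_false, not_and]
  intro h1 h2
  have := parts_card_add_le q
  omega

lemma fiber_top {a μ j : ℕ} (ha : 3 ≤ a) (hμ : 2 ≤ μ) :
    Finset.univ.filter (fun q : Nat.Partition (a - 1) => liftPart a (a - 1) q ∈ sigmaSet a μ j)
      = sigmaSet (a - 1) (μ - 1) j := by
  have hlt : a - 1 < a := by omega
  ext q
  simp only [sigmaSet, Finset.mem_filter, Finset.mem_univ, true_and]
  rw [liftPart_parts hlt]
  have h1 : a - (a - 1) = 1 := by omega
  rw [h1, Multiset.card_cons, Multiset.filter_cons_of_neg _ (by norm_num)]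
  constructor <;> rintro ⟨hc, hf⟩ <;> exact ⟨by omega, hf⟩

lemma fiber_lower {a μ j i : ℕ} (hi2 : i ≤ a - 2) (ha : 3 ≤ a) (hμ : 2 ≤ μ) (hj : 1 ≤ j) :
    Finset.univ.filter (fun q : Nat.Partition i => liftPart a i q ∈ sigmaSet a μ j)
      = sigmaSet i (μ - 1) (j - 1) := by
  have hlt : i < a := by omega
  have h2 : 2 ≤ a - i := by omega
  ext q
  simp only [sigmaSet, Finset.mem_filter, Finset.mem_univ, true_and]
  rw [liftPart_parts hlt, Multiset.card_cons, Multiset.filter_cons_of_pos _ h2,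
    Multiset.card_cons]
  have hrw : Multiset.filter (LE.le 2) q.parts = Multiset.filter (fun x => 2 ≤ x) q.parts := rfl
  constructor <;> rintro ⟨hc, hf⟩ <;> refine ⟨by omega, ?_⟩ <;>
    simp only [hrw] at hf ⊢ <;> omega


end Aux

/-- Recurrence for `σ_{μ,j}(p_a)`: given e-basis expansions `p_i = Σ_λ (c i λ) e_λ`
for all `i ≤ a`, we have, for `a ≥ 3`, `μ ≥ 2`, `j ≥ 1`,
`σ_{μ,j}(p_a) = σ_{μ−1,j}(p_{a−1}) + Σ_{i=μ+j−2}^{a−2} (−1)^{a−1+i} σ_{μ−1,j−1}(p_i)`. -/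
theorem sigma_psum_recurrence (N a μ j : ℕ) (ha : 3 ≤ a) (hμ : 2 ≤ μ) (hj : 1 ≤ j)
    (hN : a ≤ N)
    (c : (i : ℕ) → i.Partition → ℚ)
    (hc : ∀ i ≤ a, psum (Fin N) ℚ i = ∑ p : i.Partition, c i p • esymmPart (Fin N) ℚ p) :
    ∑ p ∈ sigmaSet a μ j, c a p =
      (∑ p ∈ sigmaSet (a - 1) (μ - 1) j, c (a - 1) p) +
        ∑ i ∈ Finset.Icc (μ + j - 2) (a - 2),
          (-1 : ℚ) ^ (a - 1 + i) * ∑ p ∈ sigmaSet i (μ - 1) (j - 1), c i p := by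
  have hc' : ∀ i, 1 ≤ i → i < a →
      psum (Fin N) ℚ i = ∑ p : i.Partition, c i p • esymmPart (Fin N) ℚ p :=
    fun i _ hia => hc i hia.le
  have hexp := psum_expand (N := N) (by omega) c hc'
  have hzero : ∑ l : Nat.Partition a, (c a l - cNew a c l) • esymmPart (Fin N) ℚ l = 0 := by
    simp only [sub_smul, Finset.sum_sub_distrib]
    rw [← hc a le_rfl, ← hexp, sub_self]
  have hceq : ∀ l, c a l = cNew a c l :=
    fun l => sub_eq_zero.mp (esymmPart_eq_zero hN _ hzero l)
  set S := sigmaSet a μ j with hS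
  have step0 : ∑ p ∈ S, c a p = ∑ p ∈ S, cNew a c p :=
    Finset.sum_congr rfl (fun p _ => hceq p)
  rw [step0]
  simp only [cNew]
  rw [Finset.sum_add_distrib]
  have part1 : ∑ l ∈ S,
      (if l = Nat.Partition.indiscrete a then ((-1 : ℚ) ^ (a + 1) * a) else 0) = 0 := by
    refine Finset.sum_eq_zero fun l hl => ?_
    rw [if_neg]
    intro hind
    rw [hS, sigmaSet, Finset.mem_filter] at hl
    have hcard := hl.2.1
    rw [hind, Nat.Partition.indiscrete_parts (by omega)] at hcard
    simp at hcard
    omega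
  rw [part1, zero_add]
  rw [Finset.sum_comm]
  have step2 : ∀ i ∈ Finset.Icc 1 (a - 1),
      (∑ l ∈ S, ∑ q ∈ Finset.univ.filter (fun q : Nat.Partition i => liftPart a i q = l),
          (-1 : ℚ) ^ (a - 1 + i) * c i q)
        = ∑ q ∈ Finset.univ.filter (fun q : Nat.Partition i => liftPart a i q ∈ S),
            (-1 : ℚ) ^ (a - 1 + i) * c i q :=
    fun i _ => Finset.sum_fiberwise_eq_sum_filter _ _ _ _
  rw [Finset.sum_congr rfl step2]
  have hsplit : Finset.Icc 1 (a - 1) = insert (a - 1) (Finset.Icc 1 (a - 2)) := by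
    ext x
    simp only [Finset.mem_Icc, Finset.mem_insert]
    omega
  rw [hsplit, Finset.sum_insert (by simp only [Finset.mem_Icc]; omega)]
  have htop : ∑ q ∈ Finset.univ.filter
        (fun q : Nat.Partition (a - 1) => liftPart a (a - 1) q ∈ S),
        (-1 : ℚ) ^ (a - 1 + (a - 1)) * c (a - 1) q
      = ∑ p ∈ sigmaSet (a - 1) (μ - 1) j, c (a - 1) p := by
    rw [hS, fiber_top ha hμ]
    refine Finset.sum_congr rfl fun q _ => ?_
    rw [Even.neg_one_pow ⟨a - 1, rfl⟩, one_mul]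
  rw [htop]
  congr 1
  have step3 : ∀ i ∈ Finset.Icc 1 (a - 2),
      (∑ q ∈ Finset.univ.filter (fun q : Nat.Partition i => liftPart a i q ∈ S),
          (-1 : ℚ) ^ (a - 1 + i) * c i q)
        = (-1 : ℚ) ^ (a - 1 + i) * ∑ p ∈ sigmaSet i (μ - 1) (j - 1), c i p := by
    intro i hi
    simp only [Finset.mem_Icc] at hi
    rw [hS, fiber_lower hi.2 ha hμ hj, Finset.mul_sum]
  rw [Finset.sum_congr rfl step3]
  refine (Finset.sum_subset (Finset.Icc_subset_Icc_left (by omega)) ?_).symm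
  intro i hi hni
  simp only [Finset.mem_Icc] at hi hni
  rw [sigmaSet_eq_empty (by omega), Finset.sum_empty, mul_zero]
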